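/- Every topological sort of a canonical partially-ordered plan derived from a valid sequential plan is itself a valid sequential plan. -/

import Mathlib

structure Strips (F A : Type) where
  init : Set F
  goal : Set F
  pre : A → Set F
  add : A → Set F
  del : A → Set F
  cost : A → ℕ

def Strips.step {F A : Type} (Q : Strips F A) (s : Set F) (a : A) : Set F :=
  (s \ Q.del a) ∪ Q.add a

def Strips.run {F A : Type} (Q : Strips F A) (s : Set F) (p : List A) : Set F :=
  p.foldl Q.step s

def Strips.ValidFrom {F A : Type} (Q : Strips F A) : Set F → List A → Prop
  | _, [] => True
  | s, a :: p => Q.pre a ⊆ s ∧ Q.ValidFrom (Q.step s a) p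

def Strips.Solves {F A : Type} (Q : Strips F A) (p : List A) : Prop :=
  Q.ValidFrom Q.init p ∧ Q.goal ⊆ Q.run Q.init p

def Strips.planCost {F A : Type} (Q : Strips F A) (p : List A) : ℕ :=
  (p.map Q.cost).sum

/-- The layered make-progress rule: in the induced state sequence, no state at a
later index is a subset of a state at an earlier index. -/
def Strips.MakesProgress {F A : Type} (Q : Strips F A) (s : Set F) (p : List A) : Prop :=
  ∀ i j : ℕ, i < j → j ≤ p.length → ¬ Q.run s (p.take j) ⊆ Q.run s (p.take i)

/-- The delete-free relaxation: all delete-effects removed. -/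
def Strips.relax {F A : Type} (Q : Strips F A) : Strips F A :=
  { Q with del := fun _ => ∅ }

/-- The base edges of the canonical partially-ordered plan derived from sequential
plan `S`: for occurrence positions `i` preceding `j`, an edge `i ≺ j` if
`i` adds a precondition of `j`; `j` deletes a precondition of `i`; `i` adds a
fluent `j` deletes; `i` deletes a fluent `j` adds; or `i` and `j` are
occurrences of the same action. -/
def canonBase {F A : Type} (Q : Strips F A) (S : List A)
    (i j : Fin S.length) : Prop :=
  (i : ℕ) < (j : ℕ) ∧
    ((Q.add (S.get i) ∩ Q.pre (S.get j)).Nonempty ∨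
     (Q.del (S.get j) ∩ Q.pre (S.get i)).Nonempty ∨
     (Q.add (S.get i) ∩ Q.del (S.get j)).Nonempty ∨
     (Q.del (S.get i) ∩ Q.add (S.get j)).Nonempty ∨
     S.get i = S.get j)

/-- The canonical partial order: transitive closure of the base edges. -/
def canonPrec {F A : Type} (Q : Strips F A) (S : List A) :
    Fin S.length → Fin S.length → Prop :=
  Relation.TransGen (canonBase Q S)

namespace Strips
variable {F A : Type} {Q : Strips F A}

lemma mem_step {s : Set F} {a : A} {f : F} :
    f ∈ Q.step s a ↔ f ∈ Q.add a ∨ (f ∈ s ∧ f ∉ Q.del a) := by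
  simp [Strips.step]; tauto

lemma run_cons (s : Set F) (a : A) (p : List A) :
    Q.run s (a :: p) = Q.run (Q.step s a) p := rfl

lemma run_append (s : Set F) (p₁ p₂ : List A) :
    Q.run s (p₁ ++ p₂) = Q.run (Q.run s p₁) p₂ := List.foldl_append

lemma mem_run_of_persist {s : Set F} {f : F} {p : List A}
    (hs : f ∈ s) (h : ∀ a ∈ p, f ∈ Q.del a → f ∈ Q.add a) : f ∈ Q.run s p := by
  induction p generalizing s with
  | nil => exact hs
  | cons a p ih =>
    rw [run_cons]
    refine ih ?_ (fun b hb => h b (List.mem_cons_of_mem _ hb))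
    rw [mem_step]
    by_cases hd : f ∈ Q.del a
    · exact Or.inl (h a (List.mem_cons_self) hd)
    · exact Or.inr ⟨hs, hd⟩

lemma mem_run_of_add {s : Set F} {f : F} {a : A} {p₁ p₂ : List A}
    (ha : f ∈ Q.add a) (h : ∀ b ∈ p₂, f ∈ Q.del b → f ∈ Q.add b) :
    f ∈ Q.run s (p₁ ++ a :: p₂) := by
  rw [run_append, run_cons]
  exact mem_run_of_persist (mem_step.2 (Or.inl ha)) h

lemma of_mem_run {s : Set F} {f : F} {p : List A}
    (hf : f ∈ Q.run s p) (h : ∀ a ∈ p, f ∉ Q.add a) :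
    f ∈ s ∧ ∀ a ∈ p, f ∉ Q.del a := by
  induction p generalizing s with
  | nil => exact ⟨hf, by simp⟩
  | cons a p ih =>
    rw [run_cons] at hf
    obtain ⟨h1, h2⟩ := ih hf (fun b hb => h b (List.mem_cons_of_mem _ hb))
    rw [mem_step] at h1
    rcases h1 with h1 | ⟨h1, h1'⟩
    · exact absurd h1 (h a (List.mem_cons_self))
    · refine ⟨h1, fun b hb => ?_⟩
      rcases List.mem_cons.1 hb with rfl | hb
      · exact h1'
      · exact h2 b hb

lemma validFrom_iff {s : Set F} {p : List A} :
    Q.ValidFrom s p ↔ ∀ t (h : t < p.length), Q.pre p[t] ⊆ Q.run s (p.take t) := by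
  induction p generalizing s with
  | nil => simp [ValidFrom]
  | cons a p ih =>
    simp only [ValidFrom, ih]
    constructor
    · rintro ⟨h0, h1⟩ t ht
      cases t with
      | zero => exact h0
      | succ t => exact h1 t (by simpa using ht)
    · intro h
      refine ⟨h 0 (by simp), fun t ht => ?_⟩
      exact h (t+1) (by simpa using ht)

end Strips

namespace Strips
section Key
variable {F A : Type} {Q : Strips F A} {S : List A} {L : List (Fin S.length)}

lemma key (hperm : L.Perm (List.finRange S.length))
    (htopo : L.Pairwise fun i j => ¬ canonPrec Q S j i)
    (f : F) (i t : ℕ) (hi : i ≤ S.length) (ht : t ≤ L.length)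
    (H1 : f ∈ Q.run Q.init (S.take i))
    (H2 : ∀ j : Fin S.length, (j:ℕ) < i → f ∈ Q.add (S.get j) → L.idxOf j < t)
    (H3 : ∀ j : Fin S.length, i ≤ (j:ℕ) → f ∈ Q.del (S.get j) → f ∉ Q.add (S.get j) →
      t ≤ L.idxOf j) :
    f ∈ Q.run Q.init ((L.take t).map S.get) := by
  classical
  have hnd : L.Nodup := hperm.nodup_iff.2 (List.nodup_finRange _)
  have hmem : ∀ j : Fin S.length, j ∈ L := fun j => hperm.mem_iff.2 (List.mem_finRange j)
  have hpos : ∀ j : Fin S.length, L.idxOf j < L.length :=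
    fun j => List.idxOf_lt_length_iff.2 (hmem j)
  have hgetpos : ∀ j : Fin S.length, L[L.idxOf j]'(hpos j) = j :=
    fun j => List.getElem_idxOf (hpos j)
  have hposget : ∀ u (hu : u < L.length), L.idxOf (L[u]'hu) = u :=
    fun u hu => List.Nodup.idxOf_getElem hnd u hu
  have horder : ∀ {a b : Fin S.length}, canonBase Q S a b → L.idxOf a < L.idxOf b := by
    intro a b h
    rcases lt_trichotomy (L.idxOf a) (L.idxOf b) with h1 | h1 | h1
    · exact h1
    · exfalso
      have hab : a = b := (List.idxOf_inj (hmem a)).1 h1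
      subst hab; exact lt_irrefl _ h.1
    · exfalso
      have hp := List.pairwise_iff_getElem.1 htopo _ _ (hpos b) (hpos a) h1
      rw [hgetpos, hgetpos] at hp
      exact hp (Relation.TransGen.single h)
  -- elements of (L.take t): give an index u < t
  have hLmem : ∀ j ∈ L.take t, L.idxOf j < t := by
    intro j hj
    rw [List.mem_iff_getElem] at hj
    obtain ⟨u, hu, rfl⟩ := hj
    have hu' : u < t := by
      rw [List.length_take_of_le ht] at hu; exact hu
    rw [List.getElem_take, hposget]
    exact hu'
  by_cases hadd : ∃ k : Fin S.length, (k:ℕ) < i ∧ f ∈ Q.add (S.get k)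
  · -- last adder
    obtain ⟨k0, hk0⟩ := hadd
    set T : Finset (Fin S.length) :=
      Finset.univ.filter (fun k => (k:ℕ) < i ∧ f ∈ Q.add (S.get k)) with hT
    have hTne : T.Nonempty :=
      ⟨k0, by rw [hT, Finset.mem_filter]; exact ⟨Finset.mem_univ _, hk0⟩⟩
    obtain ⟨k, hkT, hkmaxT⟩ : ∃ k, k ∈ T ∧ ∀ m ∈ T, m ≤ k :=
      ⟨T.max' hTne, T.max'_mem hTne, fun m hm => T.le_max' m hm⟩
    have hki : (k:ℕ) < i := by simpa [hT] using (Finset.mem_filter.1 hkT).2.1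
    have hkadd : f ∈ Q.add (S.get k) := by simpa [hT] using (Finset.mem_filter.1 hkT).2.2
    have hkmax : ∀ m : Fin S.length, (m:ℕ) < i → f ∈ Q.add (S.get m) → (m:ℕ) ≤ (k:ℕ) := by
      intro m hm1 hm2
      exact_mod_cast hkmaxT m (by rw [hT, Finset.mem_filter]; exact ⟨Finset.mem_univ _, hm1, hm2⟩)
    -- S-side: no deletes strictly between k and i
    have hptake : (S.take i).length = i := List.length_take_of_le hi
    have hdecomp : S.take i =
        (S.take i).take (k:ℕ) ++ (S.take i)[(k:ℕ)]'(by omega) :: (S.take i).drop ((k:ℕ)+1) := by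
      conv_lhs => rw [← List.take_append_drop (k:ℕ) (S.take i)]
      rw [List.drop_eq_getElem_cons (by omega)]
    have hdropmem : ∀ a ∈ (S.take i).drop ((k:ℕ)+1), ∃ m : Fin S.length,
        (k:ℕ) < (m:ℕ) ∧ (m:ℕ) < i ∧ S.get m = a := by
      intro a ha
      rw [List.mem_iff_getElem] at ha
      obtain ⟨v, hv, rfl⟩ := ha
      have hv' : (k:ℕ)+1+v < i := by
        have := hv; rw [List.length_drop, hptake] at this; omega
      refine ⟨⟨(k:ℕ)+1+v, by omega⟩, by simp; omega, by simpa using hv', ?_⟩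
      rw [List.getElem_drop, List.getElem_take]
      rfl
    have hdelmid : ∀ a ∈ (S.take i).drop ((k:ℕ)+1), f ∉ Q.del a := by
      have hrun : f ∈ Q.run (Q.step (Q.run Q.init ((S.take i).take (k:ℕ)))
          ((S.take i)[(k:ℕ)]'(by omega))) ((S.take i).drop ((k:ℕ)+1)) := by
        rw [← run_cons, ← run_append, ← hdecomp]; exact H1
      refine (of_mem_run hrun ?_).2
      intro a ha
      obtain ⟨m, hm1, hm2, rfl⟩ := hdropmem a ha
      intro habs
      have := hkmax m hm2 habs
      omega
    -- L-side
    have hu0 : L.idxOf k < t := H2 k hki hkadd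
    have hu0' : L.idxOf k < (L.take t).length := by
      rwa [List.length_take_of_le ht]
    have hLk : (L.take t)[L.idxOf k]'hu0' = k := by
      rw [List.getElem_take]; exact hgetpos k
    have hLdecomp : (L.take t).map S.get =
        ((L.take t).take (L.idxOf k)).map S.get ++ S.get k ::
          ((L.take t).drop (L.idxOf k + 1)).map S.get := by
      conv_lhs => rw [← List.take_append_drop (L.idxOf k) (L.take t),
        List.drop_eq_getElem_cons hu0', hLk]
      rw [List.map_append, List.map_cons]
    rw [hLdecomp]
    apply mem_run_of_add hkadd
    intro b hb hbdel
    by_contra hbadd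
    rw [List.mem_map] at hb
    obtain ⟨j, hj, rfl⟩ := hb
    -- j occurs at position u with indexOf k < u < t
    have hju : L.idxOf k < L.idxOf j ∧ L.idxOf j < t := by
      rw [List.mem_iff_getElem] at hj
      obtain ⟨v, hv, rfl⟩ := hj
      have hv1 : L.idxOf k + 1 + v < t := by
        have := hv
        rw [List.length_drop, List.length_take_of_le ht] at this; omega
      rw [List.getElem_drop, List.getElem_take, hposget]
      omega
    rcases lt_trichotomy (j:ℕ) (k:ℕ) with hjk | hjk | hjk
    · -- j before k in S: j deletes what k adds, edge j ≺ k
      have : L.idxOf j < L.idxOf k :=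
        horder ⟨hjk, Or.inr (Or.inr (Or.inr (Or.inl ⟨f, hbdel, hkadd⟩)))⟩
      omega
    · have : j = k := Fin.ext hjk
      subst this; omega
    · rcases lt_or_ge (j:ℕ) i with hji | hji
      · -- strictly between k and i in S: contradiction with hdelmid
        refine hdelmid (S.get j) ?_ hbdel
        have : ((S.take i).drop ((k:ℕ)+1))[(j:ℕ) - ((k:ℕ)+1)]'(by
            rw [List.length_drop, hptake]; omega) = S.get j := by
          rw [List.getElem_drop, List.getElem_take]
          congr 1
          omega
        rw [← this]
        exact List.getElem_mem _
      · -- j at or after i: H3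
        have := H3 j hji hbdel hbadd
        omega
  · -- no adder before i: f persists from init
    push_neg at hadd
    have htakeS : ∀ a ∈ S.take i, ∃ m : Fin S.length, (m:ℕ) < i ∧ S.get m = a := by
      intro a ha
      rw [List.mem_iff_getElem] at ha
      obtain ⟨m, hm, rfl⟩ := ha
      have hm' : m < i := by
        have := hm; rw [List.length_take_of_le hi] at this; exact this
      exact ⟨⟨m, by omega⟩, hm', by rw [List.getElem_take]; rfl⟩
    obtain ⟨hinit, hdel⟩ := of_mem_run H1 (by
      intro a ha
      obtain ⟨m, hm, rfl⟩ := htakeS a ha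
      exact hadd m hm)
    apply mem_run_of_persist hinit
    intro b hb hbdel
    by_contra hbadd
    rw [List.mem_map] at hb
    obtain ⟨j, hj, rfl⟩ := hb
    have hjt : L.idxOf j < t := hLmem j hj
    rcases lt_or_ge (j:ℕ) i with hji | hji
    · refine hdel (S.get j) ?_ hbdel
      have : (S.take i)[(j:ℕ)]'(by rw [List.length_take_of_le hi]; omega) = S.get j := by
        rw [List.getElem_take]; rfl
      rw [← this]; exact List.getElem_mem _
    · have := H3 j hji hbdel hbadd
      omega

end Key
end Strips

lemma Strips.idxOf_lt_of_base {F A : Type} {Q : Strips F A} {S : List A}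
    {L : List (Fin S.length)}
    (hperm : L.Perm (List.finRange S.length))
    (htopo : L.Pairwise fun i j => ¬ canonPrec Q S j i)
    {a b : Fin S.length} (h : canonBase Q S a b) :
    L.idxOf a < L.idxOf b := by
  classical
  have hnd : L.Nodup := hperm.nodup_iff.2 (List.nodup_finRange _)
  have hmem : ∀ j : Fin S.length, j ∈ L := fun j => hperm.mem_iff.2 (List.mem_finRange j)
  have hpos : ∀ j : Fin S.length, L.idxOf j < L.length :=
    fun j => List.idxOf_lt_length_iff.2 (hmem j)
  have hgetpos : ∀ j : Fin S.length, L[L.idxOf j]'(hpos j) = j :=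
    fun j => List.getElem_idxOf (hpos j)
  rcases lt_trichotomy (L.idxOf a) (L.idxOf b) with h1 | h1 | h1
  · exact h1
  · exfalso
    have hab : a = b := (List.idxOf_inj (hmem a)).1 h1
    subst hab; exact lt_irrefl _ h.1
  · exfalso
    have hp := List.pairwise_iff_getElem.1 htopo _ _ (hpos b) (hpos a) h1
    rw [hgetpos, hgetpos] at hp
    exact hp (Relation.TransGen.single h)

/-- Every topological sort (linear extension) of the canonical partially-ordered plan
derived from a valid sequential plan is itself a valid sequential plan. -/
theorem canon_topoSort_solves {F A : Type} (Q : Strips F A) (S : List A)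
    (hS : Q.Solves S) (L : List (Fin S.length))
    (hperm : L.Perm (List.finRange S.length))
    (htopo : L.Pairwise fun i j => ¬ canonPrec Q S j i) :
    Q.Solves (L.map S.get) := by
  classical
  obtain ⟨hvalid, hgoal⟩ := hS
  have hnd : L.Nodup := hperm.nodup_iff.2 (List.nodup_finRange _)
  have hmem : ∀ j : Fin S.length, j ∈ L := fun j => hperm.mem_iff.2 (List.mem_finRange j)
  have hLlen : L.length = S.length := by simpa using hperm.length_eq
  constructor
  · rw [Strips.validFrom_iff]
    intro t htlen
    have htL : t < L.length := by simpa using htlen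
    have hget : (L.map S.get)[t]'htlen = S.get (L[t]'htL) := List.getElem_map _
    rw [hget]
    intro f hf
    set j : Fin S.length := L[t]'htL with hj
    have hpost : L.idxOf j = t := List.Nodup.idxOf_getElem hnd t htL
    have hvf := (Strips.validFrom_iff.1 hvalid) (j:ℕ) j.isLt
    have hf1 : f ∈ Q.run Q.init (S.take (j:ℕ)) := by
      apply hvf
      simpa using hf
    have hmain := Strips.key hperm htopo f (j:ℕ) t (le_of_lt j.isLt) (le_of_lt htL) hf1
      (fun m hm hmadd => by
        have := Strips.idxOf_lt_of_base hperm htopo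
          (a := m) (b := j) ⟨hm, Or.inl ⟨f, hmadd, hf⟩⟩
        omega)
      (fun m hm hmdel _ => by
        rcases eq_or_lt_of_le hm with hm' | hm'
        · have : m = j := Fin.ext hm'.symm
          subst this; omega
        · have := Strips.idxOf_lt_of_base hperm htopo
            (a := j) (b := m) ⟨hm', Or.inr (Or.inl ⟨f, hmdel, hf⟩)⟩
          omega)
    rwa [List.map_take] at hmain
  · intro f hf
    have hf1 : f ∈ Q.run Q.init (S.take S.length) := by
      rw [List.take_length]; exact hgoal hf
    have hmain := Strips.key hperm htopo f S.length L.length le_rfl le_rfl hf1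
      (fun m _ _ => List.idxOf_lt_length_iff.2 (hmem m))
      (fun m hm _ _ => absurd m.isLt (by omega))
    rwa [List.take_length] at hmain
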